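/- The functional ⦀v⦀ = (Σ_T ‖∇_w v‖²_T)^{1/2} is a norm on the space V_h^0: if the equivalent quantity ‖v‖_{1,h}² = Σ_T (‖∇v_0‖²_T + h_T^{-1}‖v_0 − v_b‖²_{∂T}) vanishes for v ∈ V_h^0, then v = 0. Specifically: ∇v_0 = 0 on each T forces v_0 constant per element; v_0 = v_b on each interior edge forces v_0 to be globally constant on a connected domain; and v_b = 0 on ∂Ω forces the constant to be zero. -/
import Mathlib

/-- Positive-definiteness of the discrete `H¹`-like seminorm on `V_h⁰`: if
`‖v‖_{1,h}² = Σ_T (‖∇v₀‖²_T + h_T⁻¹‖v₀ − v_b‖²_{∂T})` vanishes for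
`v = {v₀, v_b} ∈ V_h⁰`, then `v = 0`.  Vanishing of the seminorm means:
`∇v₀ = 0` on each element, so `v₀` is a constant on each element (modelled by
`v0 : ι → E`); `v₀ = v_b` on each interior edge shared by two adjacent
elements; and `v_b = 0` on boundary edges.  Since the domain is connected
(the adjacency graph `G` of the triangulation is preconnected) and some
element `i₀` touches the boundary, `v₀` and `v_b` vanish identically, so
`⦀·⦀` (equivalent to `‖·‖_{1,h}`) is a norm on `V_h⁰`. -/
theorem triple_bar_is_norm_on_Vh0
    (ι : Type*) [Fintype ι] [Nonempty ι]  -- elements of the triangulation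
    (G : SimpleGraph ι) (hconn : G.Preconnected)  -- adjacency through interior edges
    (E : Type*) [NormedAddCommGroup E] [NormedSpace ℝ E]
    (v0 : ι → E)  -- elementwise constant value of v₀ (∇v₀ = 0 on each element)
    (vb : ι → ι → E)  -- single value of v_b on the edge shared by adjacent elements
    (hv0vb : ∀ i j, G.Adj i j → v0 i = vb i j ∧ v0 j = vb i j)  -- v₀ = v_b on interior edges
    (i0 : ι) (hbdry : v0 i0 = 0)  -- v_b = 0 on ∂Ω forces v₀ = 0 on a boundary element
    : (∀ i, v0 i = 0) ∧ (∀ i j, G.Adj i j → vb i j = 0) := by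
  have hadj : ∀ i j, G.Adj i j → v0 i = v0 j := fun i j h =>
    (hv0vb i j h).1.trans (hv0vb i j h).2.symm
  have h0 : ∀ i, v0 i = 0 := by
    intro i
    obtain ⟨w⟩ := hconn i0 i
    have : ∀ {a b : ι} (w : G.Walk a b), v0 a = v0 b := by
      intro a b w
      induction w with
      | nil => rfl
      | cons h _ ih => exact (hadj _ _ h).trans ih
    rw [← this w, hbdry]
  exact ⟨h0, fun i j h => ((hv0vb i j h).1.symm.trans (h0 i))⟩
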